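/- Let m, n ≥ 1, let D_0, D_1, D_2 be m × m complex matrices, and let p_0, p_1, p_2 be homogeneous polynomials of degree n in ℂ[x_0,x_1,x_2]. For each cyclic pair, let B(p_1,p_2), B(p_2,p_0), B(p_0,p_1) be blown Bezout matrices arising from Bezout decompositions of (p_1,p_2), (p_2,p_0), (p_0,p_1) respectively. Let x, y ∈ ℂ³ and e, h ∈ ℂ^m satisfy (x_0 D_0 + x_1 D_1 + x_2 D_2)^T e = 0 and (y_0 D_0 + y_1 D_1 + y_2 D_2) h = 0. Then (x_1 y_2 − x_2 y_1) · V_n(x,e)^T ( p_0(x) B(p_1,p_2) + p_1(x) B(p_2,p_0) + p_2(x) B(p_0,p_1) ) V_n(y,h) = 0; in particular, if x_1 y_2 − x_2 y_1 ≠ 0 then V_n(x,e)^T ( p_0(x) B(p_1,p_2) + p_1(x) B(p_2,p_0) + p_2(x) B(p_0,p_1) ) V_n(y,h) = 0. -/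
import Mathlib


open Matrix

/-- Multi-indices `α ∈ ℕ³` (as triples) of total degree `k`. -/
abbrev TriIdx (k : ℕ) : Type := {α : ℕ × ℕ × ℕ // α.1 + α.2.1 + α.2.2 = k}

noncomputable instance (k : ℕ) : Fintype (TriIdx k) :=
  Fintype.ofInjective
    (fun α : TriIdx k =>
      ((⟨α.1.1, by have := α.2; omega⟩ : Fin (k + 1)),
       (⟨α.1.2.1, by have := α.2; omega⟩ : Fin (k + 1)),
       (⟨α.1.2.2, by have := α.2; omega⟩ : Fin (k + 1))))
    (by
      rintro ⟨⟨a1, a2, a3⟩, ha⟩ ⟨⟨b1, b2, b3⟩, hb⟩ hEq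
      simp only [Prod.mk.injEq, Fin.mk.injEq] at hEq
      exact Subtype.ext (by simp [hEq.1, hEq.2.1, hEq.2.2]))

/-- A Bezout decomposition of a pair `(p,q)` of homogeneous polynomials of degree `n` in
`ℂ[x₀,x₁,x₂]`. -/
def IsBezoutDecomp (n : ℕ) (p q : MvPolynomial (Fin 3) ℂ)
    (β0 β1 β2 : TriIdx (n - 1) → TriIdx (n - 1) → ℂ) : Prop :=
  (∀ i j, β0 i j = β0 j i) ∧ (∀ i j, β1 i j = β1 j i) ∧ (∀ i j, β2 i j = β2 j i) ∧
  ∀ x₀ x₁ x₂ y₀ y₁ y₂ : ℂ,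
    MvPolynomial.eval ![x₀, x₁, x₂] p * MvPolynomial.eval ![y₀, y₁, y₂] q -
        MvPolynomial.eval ![x₀, x₁, x₂] q * MvPolynomial.eval ![y₀, y₁, y₂] p =
      ∑ i : TriIdx (n - 1), ∑ j : TriIdx (n - 1),
        (x₀ ^ i.1.1 * x₁ ^ i.1.2.1 * x₂ ^ i.1.2.2) *
          (y₀ ^ j.1.1 * y₁ ^ j.1.2.1 * y₂ ^ j.1.2.2) *
          (β0 i j * (x₁ * y₂ - x₂ * y₁) + β1 i j * (x₂ * y₀ - x₀ * y₂) +
            β2 i j * (x₀ * y₁ - x₁ * y₀))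

/-- The bilinear pairing `V_n(x,e)ᵀ (β⁰⊗D₀ + β¹⊗D₁ + β²⊗D₂) V_n(y,h)` of two Vandermonde
vectors on the curve against a blown Bezout matrix. -/
noncomputable def blownPairing (m n : ℕ) (D₀ D₁ D₂ : Matrix (Fin m) (Fin m) ℂ)
    (β0 β1 β2 : TriIdx (n - 1) → TriIdx (n - 1) → ℂ)
    (x₀ x₁ x₂ y₀ y₁ y₂ : ℂ) (e h : Fin m → ℂ) : ℂ :=
  ∑ i : TriIdx (n - 1), ∑ j : TriIdx (n - 1),
    (x₀ ^ i.1.1 * x₁ ^ i.1.2.1 * x₂ ^ i.1.2.2) *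
      (y₀ ^ j.1.1 * y₁ ^ j.1.2.1 * y₂ ^ j.1.2.2) *
      (β0 i j * (e ⬝ᵥ D₀.mulVec h) + β1 i j * (e ⬝ᵥ D₁.mulVec h) +
        β2 i j * (e ⬝ᵥ D₂.mulVec h))

/-- With blown Bezout matrices of Bezout decompositions of the cyclic
pairs `(p₁,p₂)`, `(p₂,p₀)`, `(p₀,p₁)`, and `e`, `h` in the left/right kernels of the
pencil at `x` resp. `y`:
`(x₁y₂−x₂y₁) · V_n(x,e)ᵀ (p₀(x)B(p₁,p₂) + p₁(x)B(p₂,p₀) + p₂(x)B(p₀,p₁)) V_n(y,h) = 0`;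
in particular if `x₁y₂ − x₂y₁ ≠ 0` the pairing itself vanishes. -/
theorem vandermonde_bezout_image_pairing_vanishes
    (m n : ℕ) (hm : 1 ≤ m) (hn : 1 ≤ n)
    (D₀ D₁ D₂ : Matrix (Fin m) (Fin m) ℂ)
    (p₀ p₁ p₂ : MvPolynomial (Fin 3) ℂ)
    (h₀ : p₀.IsHomogeneous n) (h₁ : p₁.IsHomogeneous n) (h₂ : p₂.IsHomogeneous n)
    (β120 β121 β122 β200 β201 β202 β010 β011 β012 :
      TriIdx (n - 1) → TriIdx (n - 1) → ℂ)
    (hβ12 : IsBezoutDecomp n p₁ p₂ β120 β121 β122)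
    (hβ20 : IsBezoutDecomp n p₂ p₀ β200 β201 β202)
    (hβ01 : IsBezoutDecomp n p₀ p₁ β010 β011 β012)
    (x₀ x₁ x₂ y₀ y₁ y₂ : ℂ) (e h : Fin m → ℂ)
    (he : (x₀ • D₀ + x₁ • D₁ + x₂ • D₂)ᵀ.mulVec e = 0)
    (hh : (y₀ • D₀ + y₁ • D₁ + y₂ • D₂).mulVec h = 0) :
    (x₁ * y₂ - x₂ * y₁) *
        (MvPolynomial.eval ![x₀, x₁, x₂] p₀ *
            blownPairing m n D₀ D₁ D₂ β120 β121 β122 x₀ x₁ x₂ y₀ y₁ y₂ e h +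
          MvPolynomial.eval ![x₀, x₁, x₂] p₁ *
            blownPairing m n D₀ D₁ D₂ β200 β201 β202 x₀ x₁ x₂ y₀ y₁ y₂ e h +
          MvPolynomial.eval ![x₀, x₁, x₂] p₂ *
            blownPairing m n D₀ D₁ D₂ β010 β011 β012 x₀ x₁ x₂ y₀ y₁ y₂ e h) = 0 ∧
      (x₁ * y₂ - x₂ * y₁ ≠ 0 →
        MvPolynomial.eval ![x₀, x₁, x₂] p₀ *
            blownPairing m n D₀ D₁ D₂ β120 β121 β122 x₀ x₁ x₂ y₀ y₁ y₂ e h +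
          MvPolynomial.eval ![x₀, x₁, x₂] p₁ *
            blownPairing m n D₀ D₁ D₂ β200 β201 β202 x₀ x₁ x₂ y₀ y₁ y₂ e h +
          MvPolynomial.eval ![x₀, x₁, x₂] p₂ *
            blownPairing m n D₀ D₁ D₂ β010 β011 β012 x₀ x₁ x₂ y₀ y₁ y₂ e h = 0) := by
  set d₀ : ℂ := e ⬝ᵥ D₀.mulVec h with hd₀
  set d₁ : ℂ := e ⬝ᵥ D₁.mulVec h with hd₁
  set d₂ : ℂ := e ⬝ᵥ D₂.mulVec h with hd₂
  have hx : x₀ * d₀ + x₁ * d₁ + x₂ * d₂ = 0 := by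
    have : e ⬝ᵥ (x₀ • D₀ + x₁ • D₁ + x₂ • D₂).mulVec h = 0 := by
      rw [Matrix.dotProduct_mulVec, ← Matrix.mulVec_transpose, he]
      simp
    simpa [Matrix.add_mulVec, Matrix.smul_mulVec, dotProduct_add,
      dotProduct_smul, smul_eq_mul, hd₀, hd₁, hd₂] using this
  have hy : y₀ * d₀ + y₁ * d₁ + y₂ * d₂ = 0 := by
    have : e ⬝ᵥ (y₀ • D₀ + y₁ • D₁ + y₂ • D₂).mulVec h = 0 := by
      rw [hh]; simp
    simpa [Matrix.add_mulVec, Matrix.smul_mulVec, dotProduct_add,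
      dotProduct_smul, smul_eq_mul, hd₀, hd₁, hd₂] using this
  set c : ℂ := x₁ * y₂ - x₂ * y₁ with hc
  have hcd1 : c * d₁ = (x₂ * y₀ - x₀ * y₂) * d₀ := by
    linear_combination y₂ * hx - x₂ * hy
  have hcd2 : c * d₂ = (x₀ * y₁ - x₁ * y₀) * d₀ := by
    linear_combination x₁ * hy - y₁ * hx
  -- key lemma: for any Bezout decomposition, c * pairing = d₀ * (p(x)q(y) - q(x)p(y))
  have key : ∀ (p q : MvPolynomial (Fin 3) ℂ)
      (β0 β1 β2 : TriIdx (n - 1) → TriIdx (n - 1) → ℂ),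
      IsBezoutDecomp n p q β0 β1 β2 →
      c * blownPairing m n D₀ D₁ D₂ β0 β1 β2 x₀ x₁ x₂ y₀ y₁ y₂ e h =
        d₀ * (MvPolynomial.eval ![x₀, x₁, x₂] p * MvPolynomial.eval ![y₀, y₁, y₂] q -
          MvPolynomial.eval ![x₀, x₁, x₂] q * MvPolynomial.eval ![y₀, y₁, y₂] p) := by
    intro p q β0 β1 β2 hβ
    rw [hβ.2.2.2 x₀ x₁ x₂ y₀ y₁ y₂]
    unfold blownPairing
    simp only [Finset.mul_sum]
    refine Finset.sum_congr rfl fun i _ => ?_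
    refine Finset.sum_congr rfl fun j _ => ?_
    simp only [← hd₀, ← hd₁, ← hd₂]
    linear_combination
      ((x₀ ^ i.1.1 * x₁ ^ i.1.2.1 * x₂ ^ i.1.2.2) *
        (y₀ ^ j.1.1 * y₁ ^ j.1.2.1 * y₂ ^ j.1.2.2)) * (β1 i j * hcd1 + β2 i j * hcd2)
  have main : c *
      (MvPolynomial.eval ![x₀, x₁, x₂] p₀ *
          blownPairing m n D₀ D₁ D₂ β120 β121 β122 x₀ x₁ x₂ y₀ y₁ y₂ e h +
        MvPolynomial.eval ![x₀, x₁, x₂] p₁ *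
          blownPairing m n D₀ D₁ D₂ β200 β201 β202 x₀ x₁ x₂ y₀ y₁ y₂ e h +
        MvPolynomial.eval ![x₀, x₁, x₂] p₂ *
          blownPairing m n D₀ D₁ D₂ β010 β011 β012 x₀ x₁ x₂ y₀ y₁ y₂ e h) = 0 := by
    have k12 := key p₁ p₂ β120 β121 β122 hβ12
    have k20 := key p₂ p₀ β200 β201 β202 hβ20
    have k01 := key p₀ p₁ β010 β011 β012 hβ01
    linear_combination MvPolynomial.eval ![x₀, x₁, x₂] p₀ * k12 +
      MvPolynomial.eval ![x₀, x₁, x₂] p₁ * k20 +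
      MvPolynomial.eval ![x₀, x₁, x₂] p₂ * k01
  exact ⟨main, fun hne => by
    rcases mul_eq_zero.mp main with h' | h'
    · exact absurd h' hne
    · exact h'⟩
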